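/- Let m ≥ 5 and n ≥ 2 be integers, and suppose c is a locating (m+1)-coloring of K_m □ P_n. Then any two distinct columns have different missing colors; that is, for all j ≠ j', there is no color absent from both column j and column j'. -/

import Mathlib

open SimpleGraph

/-- The distance from a vertex to a set of vertices. -/
noncomputable def setDist {V : Type*} (G : SimpleGraph V) (v : V) (S : Set V) : ℕ :=
  sInf (G.dist v '' S)

/-- The color code of a vertex with respect to a `k`-coloring `c`:
the tuple of distances to the color classes. -/
noncomputable def colorCode {V : Type*} (G : SimpleGraph V) {k : ℕ} (c : V → Fin k)
    (v : V) : Fin k → ℕ :=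
  fun i => setDist G v (c ⁻¹' {i})

/-- `c` is a locating `k`-coloring of `G`: a proper coloring onto the `k` colors
such that distinct vertices have distinct color codes. -/
def IsLocatingColoring {V : Type*} (G : SimpleGraph V) {k : ℕ} (c : V → Fin k) : Prop :=
  Function.Surjective c ∧
  (∀ u v : V, G.Adj u v → c u ≠ c v) ∧
  Function.Injective (colorCode G c)

/-- The locating chromatic number: the least `k` admitting a locating `k`-coloring. -/
noncomputable def locatingChromaticNumber {V : Type*} (G : SimpleGraph V) : ℕ :=
  sInf {k : ℕ | ∃ c : V → Fin k, IsLocatingColoring G c}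

/-- A vertex is colorful w.r.t. a coloring `c` if every color appears in its
closed neighborhood. -/
def IsColorful {V : Type*} (G : SimpleGraph V) {k : ℕ} (c : V → Fin k) (v : V) : Prop :=
  ∀ i : Fin k, ∃ u : V, (u = v ∨ G.Adj v u) ∧ c u = i


namespace S6


/-- natural-number distance, omega-friendly -/
def pd (a b : ℕ) : ℕ := (a - b) + (b - a)

abbrev KP (m n : ℕ) : SimpleGraph (Fin m × Fin n) :=
  (⊤ : SimpleGraph (Fin m)) □ pathGraph n

lemma kp_adj {m n : ℕ} {u v : Fin m × Fin n} :
    (KP m n).Adj u v ↔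
      (u.1 ≠ v.1 ∧ u.2 = v.2) ∨
        ((u.2.val + 1 = v.2.val ∨ v.2.val + 1 = u.2.val) ∧ u.1 = v.1) := by
  rw [boxProd_adj, pathGraph_adj, top_adj]

lemma kp_conn {m n : ℕ} (hm : 1 ≤ m) (hn : 1 ≤ n) : (KP m n).Connected := by
  have : Nonempty (Fin m) := ⟨⟨0, hm⟩⟩
  obtain ⟨n', rfl⟩ := Nat.exists_eq_succ_of_ne_zero (by omega : n ≠ 0)
  exact Connected.boxProd connected_top (pathGraph_connected n')

lemma walk_lb {m n : ℕ} : ∀ {u v : Fin m × Fin n} (w : (KP m n).Walk u v),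
    pd u.2.val v.2.val + (if u.1 = v.1 then 0 else 1) ≤ w.length := by
  intro u v w
  induction w with
  | nil => simp [pd]
  | @cons a b v hab p ih =>
    rw [Walk.length_cons]
    rcases kp_adj.mp hab with ⟨h1, h2⟩ | ⟨h1, h2⟩
    · have hpd : pd a.2.val v.2.val = pd b.2.val v.2.val := by rw [h2]
      by_cases hbv : b.1 = v.1 <;> by_cases hav : a.1 = v.1 <;>
        simp only [hbv, hav, if_true, if_false] at ih ⊢ <;> omega
    · have hpd : pd a.2.val v.2.val ≤ pd b.2.val v.2.val + 1 := by
        simp only [pd]; omega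
      rw [h2]
      by_cases hbv : b.1 = v.1 <;>
        simp only [hbv, if_true, if_false] at ih ⊢ <;> omega

lemma dist_row_le {m n : ℕ} (hm : 1 ≤ m) (hn : 1 ≤ n) (i : Fin m) :
    ∀ (k : ℕ) (j j' : Fin n), pd j.val j'.val ≤ k →
      (KP m n).dist (i, j) (i, j') ≤ k := by
  intro k
  induction k with
  | zero =>
    intro j j' h
    have : j = j' := Fin.ext (by simp only [pd] at h; omega)
    subst this; rw [SimpleGraph.dist_self]
  | succ k ih =>
    intro j j' h
    by_cases hjj : j = j'
    · subst hjj; rw [SimpleGraph.dist_self]; omega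
    · have hne : j.val ≠ j'.val := fun hv => hjj (Fin.ext hv)
      obtain ⟨j1, hadj, hd⟩ :
          ∃ j1 : Fin n, (pathGraph n).Adj j j1 ∧ pd j1.val j'.val ≤ k := by
        rcases lt_or_gt_of_ne hne with h' | h'
        · refine ⟨⟨j.val + 1, by have := j'.isLt; omega⟩, ?_, ?_⟩
          · rw [pathGraph_adj]; left; rfl
          · simp only [pd] at h ⊢; omega
        · refine ⟨⟨j.val - 1, by have := j.isLt; omega⟩, ?_, ?_⟩
          · rw [pathGraph_adj]; right; simp only; omega
          · simp only [pd] at h ⊢; omega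
      have hadj2 : (KP m n).Adj (i, j) (i, j1) := boxProd_adj_right.mpr hadj
      have hstep : (KP m n).dist (i, j) (i, j1) ≤ 1 := by
        have hw := SimpleGraph.dist_le (Walk.cons hadj2 (Walk.nil (G := KP m n)))
        simpa using hw
      calc (KP m n).dist (i, j) (i, j') ≤
          (KP m n).dist (i, j) (i, j1) + (KP m n).dist (i, j1) (i, j') :=
            (kp_conn hm hn).dist_triangle
        _ ≤ 1 + k := add_le_add hstep (ih j1 j' hd)
        _ = k + 1 := by omega

lemma kp_dist {m n : ℕ} (hm : 1 ≤ m) (hn : 1 ≤ n) (u v : Fin m × Fin n) :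
    (KP m n).dist u v = pd u.2.val v.2.val + (if u.1 = v.1 then 0 else 1) := by
  apply le_antisymm
  · have h1 : (KP m n).dist (u.1, u.2) (u.1, v.2) ≤ pd u.2.val v.2.val :=
      dist_row_le hm hn u.1 _ u.2 v.2 le_rfl
    have h2 : (KP m n).dist (u.1, v.2) v ≤ (if u.1 = v.1 then 0 else 1) := by
      by_cases hv : u.1 = v.1
      · simp only [hv, if_true]
        have : (v.1, v.2) = v := rfl
        rw [this]; simp
      · simp only [hv, if_false]
        have hadj : (KP m n).Adj (u.1, v.2) (v.1, v.2) :=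
          boxProd_adj_left.mpr ((top_adj _ _).mpr hv)
        have : (v.1, v.2) = v := rfl
        rw [this] at hadj
        have hw := SimpleGraph.dist_le (Walk.cons hadj (Walk.nil (G := KP m n)))
        simpa using hw
    calc (KP m n).dist u v ≤
        (KP m n).dist u (u.1, v.2) + (KP m n).dist (u.1, v.2) v :=
          (kp_conn hm hn).dist_triangle
      _ ≤ _ := add_le_add h1 h2
  · obtain ⟨w, hw⟩ := (kp_conn hm hn).exists_walk_length_eq_dist u v
    rw [← hw]
    exact walk_lb w

lemma setDist_le {V : Type*} (G : SimpleGraph V) {v u : V} {S : Set V} (h : u ∈ S) :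
    setDist G v S ≤ G.dist v u :=
  Nat.sInf_le ⟨u, h, rfl⟩

lemma setDist_exists {V : Type*} (G : SimpleGraph V) (v : V) {S : Set V}
    (h : S.Nonempty) : ∃ u ∈ S, setDist G v S = G.dist v u := by
  obtain ⟨u, hu, he⟩ := Nat.sInf_mem (h.image (G.dist v))
  exact ⟨u, hu, he.symm⟩


variable {m n : ℕ} (c : Fin m × Fin n → Fin (m + 1)) (x : Fin (m + 1))

def Vx : Set (Fin m × Fin n) := c ⁻¹' {x}

noncomputable def Dcol (t : Fin n) : ℕ :=
  sInf ((fun u : Fin m × Fin n => pd t.val u.2.val) '' (Vx c x))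

lemma mem_Vx {u : Fin m × Fin n} : u ∈ Vx c x ↔ c u = x := Iff.rfl

lemma Dcol_le {t : Fin n} {u : Fin m × Fin n} (h : u ∈ Vx c x) :
    Dcol c x t ≤ pd t.val u.2.val :=
  Nat.sInf_le ⟨u, h, rfl⟩

lemma Dcol_exists (t : Fin n) (hV : (Vx c x).Nonempty) :
    ∃ u ∈ Vx c x, pd t.val u.2.val = Dcol c x t := by
  obtain ⟨u, hu, he⟩ := Nat.sInf_mem (hV.image (fun u : Fin m × Fin n => pd t.val u.2.val))
  exact ⟨u, hu, he⟩

lemma Dcol_pos {t : Fin n} (hM : ∀ i, c (i, t) ≠ x) (hV : (Vx c x).Nonempty) :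
    1 ≤ Dcol c x t := by
  obtain ⟨⟨r, q⟩, hu, he⟩ := Dcol_exists c x t hV
  rcases Nat.eq_zero_or_pos (Dcol c x t) with h0 | h1
  · exfalso
    rw [h0] at he
    have hq : q = t := Fin.ext (by simp only [pd] at he; omega)
    subst hq
    exact hM r hu
  · exact h1

lemma sdist_ge (hm : 1 ≤ m) (hn : 1 ≤ n) (hV : (Vx c x).Nonempty) (i : Fin m) (t : Fin n) :
    Dcol c x t ≤ setDist (KP m n) (i, t) (Vx c x) := by
  obtain ⟨⟨ur, uq⟩, hu, he⟩ := setDist_exists (KP m n) (i, t) hV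
  rw [he, kp_dist hm hn]
  have h2 := Dcol_le c x (t := t) hu
  simp only [pd] at h2 ⊢
  split <;> omega

lemma sdist_le (hm : 1 ≤ m) (hn : 1 ≤ n) (hV : (Vx c x).Nonempty) (i : Fin m) (t : Fin n) :
    setDist (KP m n) (i, t) (Vx c x) ≤ Dcol c x t + 1 := by
  obtain ⟨⟨ur, uq⟩, hu, he⟩ := Dcol_exists c x t hV
  have h1 := setDist_le (KP m n) (v := (i, t)) hu
  rw [kp_dist hm hn] at h1
  simp only [pd] at h1 he
  split at h1 <;> omega

lemma sdist_eq_min (hm : 1 ≤ m) (hn : 1 ≤ n) (hV : (Vx c x).Nonempty) {i : Fin m} {t : Fin n}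
    (h : setDist (KP m n) (i, t) (Vx c x) = Dcol c x t) :
    ∃ q : Fin n, (i, q) ∈ Vx c x ∧ pd t.val q.val = Dcol c x t := by
  obtain ⟨⟨ur, uq⟩, hu, he⟩ := setDist_exists (KP m n) (i, t) hV
  rw [h, kp_dist hm hn] at he
  have hle := Dcol_le c x (t := t) hu
  simp only [pd] at he hle
  have hind : i = ur := by
    by_contra hcon
    rw [if_neg hcon] at he
    omega
  subst hind
  rw [if_pos rfl] at he
  exact ⟨uq, hu, by simp only [pd]; omega⟩

lemma col_inj (hproper : ∀ u v, (KP m n).Adj u v → c u ≠ c v) {t : Fin n} {i i' : Fin m}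
    (h : c (i, t) = c (i', t)) : i = i' := by
  by_contra hne
  exact hproper (i, t) (i', t) (kp_adj.mpr (Or.inl ⟨hne, rfl⟩)) h

lemma col_surj (hproper : ∀ u v, (KP m n).Adj u v → c u ≠ c v) {t : Fin n}
    (hM : ∀ i, c (i, t) ≠ x) {a : Fin (m + 1)} (ha : a ≠ x) :
    ∃ i : Fin m, c (i, t) = a := by
  classical
  have hinjf : Function.Injective (fun i : Fin m => c (i, t)) :=
    fun i i' h => col_inj c hproper h
  have hsub : (Finset.univ.image fun i : Fin m => c (i, t)) ⊆ Finset.univ.erase x := by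
    intro b hb
    obtain ⟨i, _, rfl⟩ := Finset.mem_image.mp hb
    exact Finset.mem_erase.mpr ⟨hM i, Finset.mem_univ _⟩
  have hcard : (Finset.univ.erase x).card ≤
      (Finset.univ.image fun i : Fin m => c (i, t)).card := by
    rw [Finset.card_image_of_injective _ hinjf,
      Finset.card_erase_of_mem (Finset.mem_univ _)]
    simp
  have heq := Finset.eq_of_subset_of_card_le hsub hcard
  have hmem : a ∈ Finset.univ.erase x := Finset.mem_erase.mpr ⟨ha, Finset.mem_univ _⟩
  rw [← heq] at hmem
  obtain ⟨i, _, hi⟩ := Finset.mem_image.mp hmem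
  exact ⟨i, hi⟩

lemma setDist_own {V : Type*} (G : SimpleGraph V) {k : ℕ} (f : V → Fin k) (v : V) :
    setDist G v (f ⁻¹' {f v}) = 0 :=
  Nat.le_zero.mp (le_of_le_of_eq (setDist_le G (show v ∈ f ⁻¹' {f v} from rfl))
    (SimpleGraph.dist_self))

lemma setDist_other (hm : 1 ≤ m) (hn : 1 ≤ n)
    (hproper : ∀ u v, (KP m n).Adj u v → c u ≠ c v) {t : Fin n}
    (hM : ∀ i, c (i, t) ≠ x) (i : Fin m) {a : Fin (m + 1)}
    (ha1 : a ≠ c (i, t)) (hax : a ≠ x) :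
    setDist (KP m n) (i, t) (c ⁻¹' {a}) = 1 := by
  obtain ⟨ia, hia⟩ := col_surj c x hproper hM hax
  have hne : i ≠ ia := fun h => ha1 (by rw [h, hia])
  apply le_antisymm
  · have h1 := setDist_le (KP m n) (v := (i, t))
      (show (ia, t) ∈ c ⁻¹' {a} from hia)
    rw [kp_dist hm hn] at h1
    simpa [pd, hne] using h1
  · obtain ⟨⟨ur, uq⟩, hu, he⟩ := setDist_exists (KP m n) (i, t)
      (⟨(ia, t), hia⟩ : (c ⁻¹' {a} : Set _).Nonempty)
    rw [he, kp_dist hm hn]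
    simp only [pd]
    by_cases hh : i = ur
    · subst hh
      have huq : uq.val ≠ t.val := by
        intro hv
        have : uq = t := Fin.ext hv
        subst this
        exact ha1 (Set.mem_singleton_iff.mp hu).symm
      rw [if_pos rfl]
      omega
    · rw [if_neg hh]
      omega

lemma codes_eq (hm : 1 ≤ m) (hn : 1 ≤ n)
    (hproper : ∀ u v, (KP m n).Adj u v → c u ≠ c v) (hV : (Vx c x).Nonempty)
    {t t' : Fin n} (hMt : ∀ i, c (i, t) ≠ x) (hMt' : ∀ i, c (i, t') ≠ x)
    (i i' : Fin m) (hcc : c (i, t) = c (i', t'))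
    (hdd : setDist (KP m n) (i, t) (Vx c x) = setDist (KP m n) (i', t') (Vx c x)) :
    colorCode (KP m n) c (i, t) = colorCode (KP m n) c (i', t') := by
  funext a
  simp only [colorCode]
  by_cases ha1 : a = c (i, t)
  · rw [ha1, setDist_own, hcc, setDist_own]
  · by_cases ha2 : a = x
    · rw [ha2]
      exact hdd
    · rw [setDist_other c x hm hn hproper hMt i ha1 ha2,
        setDist_other c x hm hn hproper hMt' i' (hcc ▸ ha1) ha2]

lemma bad_card (hm : 1 ≤ m) (hn : 1 ≤ n)
    (hproper : ∀ u v, (KP m n).Adj u v → c u ≠ c v) (hV : (Vx c x).Nonempty)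
    {t : Fin n} (hM : ∀ i, c (i, t) ≠ x) :
    (Finset.univ.filter fun i : Fin m =>
        setDist (KP m n) (i, t) (Vx c x) = Dcol c x t).card ≤ 2 := by
  classical
  have htwo : ({0, 1} : Finset ℕ).card ≤ 2 := by decide
  refine le_trans (Finset.card_le_card_of_injOn
    (fun i => if ∃ q : Fin n, (i, q) ∈ Vx c x ∧ q.val + Dcol c x t = t.val then 0 else 1)
    ?_ ?_) htwo
  · intro i _
    exact (by split <;> simp :
      (if ∃ q : Fin n, (i, q) ∈ Vx c x ∧ q.val + Dcol c x t = t.val then (0 : ℕ) else 1)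
        ∈ ({0, 1} : Finset ℕ))
  · intro i1 h1 i2 h2 heq
    replace heq :
        (if ∃ q : Fin n, (i1, q) ∈ Vx c x ∧ q.val + Dcol c x t = t.val then (0 : ℕ) else 1) =
        (if ∃ q : Fin n, (i2, q) ∈ Vx c x ∧ q.val + Dcol c x t = t.val then (0 : ℕ) else 1) := heq
    simp only [Finset.coe_filter, Set.mem_setOf_eq, Finset.mem_univ, true_and] at h1 h2
    obtain ⟨q1, hq1, hpd1⟩ := sdist_eq_min c x hm hn hV h1
    obtain ⟨q2, hq2, hpd2⟩ := sdist_eq_min c x hm hn hV h2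
    by_cases hA : ∃ q : Fin n, (i1, q) ∈ Vx c x ∧ q.val + Dcol c x t = t.val
    · have hB : ∃ q : Fin n, (i2, q) ∈ Vx c x ∧ q.val + Dcol c x t = t.val := by
        by_contra hB
        rw [if_pos hA, if_neg hB] at heq
        exact absurd heq (by norm_num)
      obtain ⟨p1, hp1, hv1⟩ := hA
      obtain ⟨p2, hp2, hv2⟩ := hB
      have hpp : p1 = p2 := Fin.ext (by omega)
      subst hpp
      exact col_inj c hproper (((mem_Vx c x).mp hp1).trans ((mem_Vx c x).mp hp2).symm)
    · have hB : ¬ ∃ q : Fin n, (i2, q) ∈ Vx c x ∧ q.val + Dcol c x t = t.val := by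
        intro hB
        rw [if_neg hA, if_pos hB] at heq
        exact absurd heq (by norm_num)
      have hv1 : t.val + Dcol c x t = q1.val := by
        have hno : ¬(q1.val + Dcol c x t = t.val) := fun h => hA ⟨q1, hq1, h⟩
        simp only [pd] at hpd1
        omega
      have hv2 : t.val + Dcol c x t = q2.val := by
        have hno : ¬(q2.val + Dcol c x t = t.val) := fun h => hB ⟨q2, hq2, h⟩
        simp only [pd] at hpd2
        omega
      have hqq : q1 = q2 := Fin.ext (by omega)
      subst hqq
      exact col_inj c hproper (((mem_Vx c x).mp hq1).trans ((mem_Vx c x).mp hq2).symm)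

lemma caseA (hm : 5 ≤ m) (hn : 1 ≤ n)
    (hproper : ∀ u v, (KP m n).Adj u v → c u ≠ c v)
    (hinj : Function.Injective (colorCode (KP m n) c)) (hV : (Vx c x).Nonempty)
    {t t' : Fin n} (htt' : t ≠ t')
    (hMt : ∀ i, c (i, t) ≠ x) (hMt' : ∀ i, c (i, t') ≠ x)
    (hDD : Dcol c x t = Dcol c x t') : False := by
  classical
  have hm1 : 1 ≤ m := by omega
  set Bt := Finset.univ.filter
    (fun i : Fin m => setDist (KP m n) (i, t) (Vx c x) = Dcol c x t) with hBt
  set Bt' := Finset.univ.filter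
    (fun i : Fin m => setDist (KP m n) (i, t') (Vx c x) = Dcol c x t') with hBt'
  have hb1 : Bt.card ≤ 2 := bad_card c x hm1 hn hproper hV hMt
  have hb2 : Bt'.card ≤ 2 := bad_card c x hm1 hn hproper hV hMt'
  set A := (Finset.univ \ Bt).image (fun i => c (i, t)) with hA
  set B := (Finset.univ \ Bt').image (fun i => c (i, t')) with hB
  have hcardA : m - 2 ≤ A.card := by
    rw [hA, Finset.card_image_of_injective _ (fun i i' h => col_inj c hproper h),
      Finset.card_sdiff_of_subset (Finset.subset_univ _)]
    simp only [Finset.card_univ, Fintype.card_fin]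
    omega
  have hcardB : m - 2 ≤ B.card := by
    rw [hB, Finset.card_image_of_injective _ (fun i i' h => col_inj c hproper h),
      Finset.card_sdiff_of_subset (Finset.subset_univ _)]
    simp only [Finset.card_univ, Fintype.card_fin]
    omega
  have hsubA : A ⊆ Finset.univ.erase x := by
    intro b hb
    obtain ⟨i, _, rfl⟩ := Finset.mem_image.mp hb
    exact Finset.mem_erase.mpr ⟨hMt i, Finset.mem_univ _⟩
  have hsubB : B ⊆ Finset.univ.erase x := by
    intro b hb
    obtain ⟨i, _, rfl⟩ := Finset.mem_image.mp hb
    exact Finset.mem_erase.mpr ⟨hMt' i, Finset.mem_univ _⟩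
  have hUB : (A ∪ B).card ≤ m := by
    refine le_trans (Finset.card_le_card (Finset.union_subset hsubA hsubB)) ?_
    rw [Finset.card_erase_of_mem (Finset.mem_univ _)]
    simp
  have hint := Finset.card_union_add_card_inter A B
  have hpos : 0 < (A ∩ B).card := by omega
  obtain ⟨a, ha⟩ := Finset.card_pos.mp hpos
  obtain ⟨haA, haB⟩ := Finset.mem_inter.mp ha
  obtain ⟨i, hiu, hia⟩ := Finset.mem_image.mp haA
  obtain ⟨i', hiu', hia'⟩ := Finset.mem_image.mp haB
  have hvi : setDist (KP m n) (i, t) (Vx c x) = Dcol c x t + 1 := by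
    have h1 := sdist_ge c x hm1 hn hV i t
    have h2 := sdist_le c x hm1 hn hV i t
    have h3 : setDist (KP m n) (i, t) (Vx c x) ≠ Dcol c x t := by
      intro hcon
      exact (Finset.mem_sdiff.mp hiu).2
        (by rw [hBt]; exact Finset.mem_filter.mpr ⟨Finset.mem_univ _, hcon⟩)
    omega
  have hvi' : setDist (KP m n) (i', t') (Vx c x) = Dcol c x t' + 1 := by
    have h1 := sdist_ge c x hm1 hn hV i' t'
    have h2 := sdist_le c x hm1 hn hV i' t'
    have h3 : setDist (KP m n) (i', t') (Vx c x) ≠ Dcol c x t' := by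
      intro hcon
      exact (Finset.mem_sdiff.mp hiu').2
        (by rw [hBt']; exact Finset.mem_filter.mpr ⟨Finset.mem_univ _, hcon⟩)
    omega
  have heqc : c (i, t) = c (i', t') := hia.trans hia'.symm
  have hveq := hinj (codes_eq c x hm1 hn hproper hV hMt hMt' i i' heqc
    (by rw [hvi, hvi', hDD]))
  exact htt' (congrArg Prod.snd hveq)

lemma caseB (hm : 5 ≤ m) (hn : 1 ≤ n)
    (hproper : ∀ u v, (KP m n).Adj u v → c u ≠ c v)
    (hinj : Function.Injective (colorCode (KP m n) c)) (hV : (Vx c x).Nonempty)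
    {s s' : Fin n} (hadj : pd s.val s'.val = 1)
    (hMs : ∀ i, c (i, s) ≠ x) (hMs' : ∀ i, c (i, s') ≠ x)
    (hD : Dcol c x s' = Dcol c x s + 1) : False := by
  classical
  have hm1 : 1 ≤ m := by omega
  have hDpos := Dcol_pos c x hMs hV
  obtain ⟨⟨r0, q0⟩, hu0, hq0⟩ := Dcol_exists c x s hV
  have h1 : Dcol c x s' ≤ pd s'.val q0.val := Dcol_le c x hu0
  have hub : setDist (KP m n) (r0, s') (Vx c x) ≤ Dcol c x s + 1 := by
    have h2 := setDist_le (KP m n) (v := (r0, s')) hu0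
    rw [kp_dist hm1 hn] at h2
    simp [pd] at h2
    simp only [pd] at h1 hq0 hadj
    omega
  have hlbv := sdist_ge c x hm1 hn hV r0 s'
  have hval : setDist (KP m n) (r0, s') (Vx c x) = Dcol c x s + 1 := by omega
  obtain ⟨i0, hi0⟩ := col_surj c x hproper hMs (hMs' r0)
  have hb1 := sdist_ge c x hm1 hn hV i0 s
  have hb2 := sdist_le c x hm1 hn hV i0 s
  rcases (by omega : setDist (KP m n) (i0, s) (Vx c x) = Dcol c x s ∨
      setDist (KP m n) (i0, s) (Vx c x) = Dcol c x s + 1) with hcase | hcase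
  · obtain ⟨q, hq, hpdq⟩ := sdist_eq_min c x hm1 hn hV hcase
    have h3 : Dcol c x s' ≤ pd s'.val q.val := Dcol_le c x hq
    have hqq0 : q = q0 := by
      apply Fin.ext
      simp only [pd] at hpdq h3 hq0 h1 hadj
      omega
    subst hqq0
    have hir : i0 = r0 :=
      col_inj c hproper (((mem_Vx c x).mp hq).trans ((mem_Vx c x).mp hu0).symm)
    have hadj2 : (KP m n).Adj (r0, s) (r0, s') := by
      have hor : s.val + 1 = s'.val ∨ s'.val + 1 = s.val := by
        simp only [pd] at hadj
        omega
      exact kp_adj.mpr (Or.inr ⟨hor, rfl⟩)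
    exact hproper _ _ hadj2 (hir ▸ hi0)
  · have hveq := hinj (codes_eq c x hm1 hn hproper hV hMs hMs' i0 r0 hi0
      (by rw [hcase, hval]))
    have hss' : s = s' := congrArg Prod.snd hveq
    rw [hss'] at hadj
    simp [pd] at hadj

end S6

/-- In any locating `(m+1)`-coloring of `K_m □ P_n` (`m ≥ 5`, `n ≥ 2`),
any two distinct columns have different missing colors. -/
theorem stmt6 (m n : ℕ) (hm : 5 ≤ m) (hn : 2 ≤ n)
    (c : Fin m × Fin n → Fin (m + 1))
    (hc : IsLocatingColoring ((⊤ : SimpleGraph (Fin m)) □ pathGraph n) c)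
    (j j' : Fin n) (hjj' : j ≠ j') :
    ¬ ∃ x : Fin (m + 1), (∀ i : Fin m, c (i, j) ≠ x) ∧ (∀ i : Fin m, c (i, j') ≠ x) := by
  classical
  rintro ⟨x, hxj, hxj'⟩
  obtain ⟨hsurj, hproper, hinj⟩ := hc
  have hm1 : 1 ≤ m := by omega
  have hn1 : 1 ≤ n := by omega
  have hV : (S6.Vx c x).Nonempty := by
    obtain ⟨v, hv⟩ := hsurj x
    exact ⟨v, hv⟩
  by_cases hI : ∃ s s' : Fin n,
      S6.pd s.val s'.val = 1 ∧ (∀ i, c (i, s) ≠ x) ∧ (∀ i, c (i, s') ≠ x)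
  · obtain ⟨s, s', h1, hMs, hMs'⟩ := hI
    have hss : s ≠ s' := by
      intro h
      rw [h] at h1
      simp [S6.pd] at h1
    have hb1 : S6.Dcol c x s ≤ S6.Dcol c x s' + 1 := by
      obtain ⟨u, hu, hpdu⟩ := S6.Dcol_exists c x s' hV
      have h2 := S6.Dcol_le c x (t := s) hu
      simp only [S6.pd] at h1 h2 hpdu
      omega
    have hb2 : S6.Dcol c x s' ≤ S6.Dcol c x s + 1 := by
      obtain ⟨u, hu, hpdu⟩ := S6.Dcol_exists c x s hV
      have h2 := S6.Dcol_le c x (t := s') hu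
      simp only [S6.pd] at h1 h2 hpdu
      omega
    rcases (by omega : S6.Dcol c x s = S6.Dcol c x s' ∨
        S6.Dcol c x s' = S6.Dcol c x s + 1 ∨ S6.Dcol c x s = S6.Dcol c x s' + 1)
        with hcc | hcc | hcc
    · exact S6.caseA c x hm hn1 hproper hinj hV hss hMs hMs' hcc
    · exact S6.caseB c x hm hn1 hproper hinj hV h1 hMs hMs' hcc
    · refine S6.caseB c x hm hn1 hproper hinj hV (s := s') (s' := s) ?_ hMs' hMs hcc
      simp only [S6.pd] at h1 ⊢
      omega
  · push_neg at hI
    have key : ∀ t : Fin n, (∀ i, c (i, t) ≠ x) → S6.Dcol c x t = 1 := by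
      intro t hMt
      obtain ⟨t1, hpd⟩ : ∃ t1 : Fin n, S6.pd t.val t1.val = 1 := by
        by_cases h : t.val + 1 < n
        · exact ⟨⟨t.val + 1, h⟩, by simp only [S6.pd]; omega⟩
        · refine ⟨⟨t.val - 1, by have := t.isLt; omega⟩, ?_⟩
          have := t.isLt
          simp only [S6.pd]
          omega
      obtain ⟨i, hi⟩ := hI t t1 hpd hMt
      have hle := S6.Dcol_le c x (t := t) (show (i, t1) ∈ S6.Vx c x from hi)
      have hge := S6.Dcol_pos c x hMt hV
      simp only [S6.pd] at hle hpd
      omega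
    exact S6.caseA c x hm hn1 hproper hinj hV hjj' hxj hxj'
      ((key j hxj).trans (key j' hxj').symm)
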